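/- Let K be an algebraically closed field and let s, r ∈ K with s ≠ 0, r ≠ 0, s² ≠ 1, r² ≠ 1; set t = diag(s, s⁻¹), t' = diag(r, r⁻¹), Δ = s − s⁻¹. Then the set {(X, Y) : X is SL₂(K)-conjugate to t, Y is SL₂(K)-conjugate to t', and trace(X·Y) = s·r + s⁻¹·r⁻¹} is the union of the SL₂(K)-orbits of the three pairs ([[s, 0],[Δ, s⁻¹]], t'), ([[s, Δ],[0, s⁻¹]], t') and (t, t'), and these three orbits are pairwise disjoint. -/

import Mathlib

open Matrix

/-- `diag(s, s⁻¹) ∈ SL₂(K)` for `s ≠ 0`. -/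
def diagSL {K : Type*} [Field K] (s : K) (hs : s ≠ 0) : SpecialLinearGroup (Fin 2) K :=
  ⟨!![s, 0; 0, s⁻¹], by rw [Matrix.det_fin_two_of]; field_simp; ring⟩

/-- `[[s, Δ],[0, s⁻¹]] ∈ SL₂(K)` where `Δ = s - s⁻¹`. -/
def upSL {K : Type*} [Field K] (s : K) (hs : s ≠ 0) : SpecialLinearGroup (Fin 2) K :=
  ⟨!![s, s - s⁻¹; 0, s⁻¹], by rw [Matrix.det_fin_two_of]; field_simp; ring⟩

/-- `[[s, 0],[Δ, s⁻¹]] ∈ SL₂(K)` where `Δ = s - s⁻¹`. -/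
def lowSL {K : Type*} [Field K] (s : K) (hs : s ≠ 0) : SpecialLinearGroup (Fin 2) K :=
  ⟨!![s, 0; s - s⁻¹, s⁻¹], by rw [Matrix.det_fin_two_of]; field_simp; ring⟩

/-- The `SL₂(K)`-orbit of the pair `(P, Q)` under simultaneous conjugation. -/
def pairOrbit {K : Type*} [Field K] (P Q : SpecialLinearGroup (Fin 2) K) :
    Set (SpecialLinearGroup (Fin 2) K × SpecialLinearGroup (Fin 2) K) :=
  {pq | ∃ A : SpecialLinearGroup (Fin 2) K, pq = (A * P * A⁻¹, A * Q * A⁻¹)}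

namespace FiberAux

variable {K : Type*} [Field K]

@[simp] lemma coe_diagSL (s : K) (hs : s ≠ 0) :
    ((diagSL s hs : SpecialLinearGroup (Fin 2) K) : Matrix (Fin 2) (Fin 2) K) = !![s, 0; 0, s⁻¹] := rfl

@[simp] lemma coe_upSL (s : K) (hs : s ≠ 0) :
    ((upSL s hs : SpecialLinearGroup (Fin 2) K) : Matrix (Fin 2) (Fin 2) K) = !![s, s - s⁻¹; 0, s⁻¹] := rfl

@[simp] lemma coe_lowSL (s : K) (hs : s ≠ 0) :
    ((lowSL s hs : SpecialLinearGroup (Fin 2) K) : Matrix (Fin 2) (Fin 2) K) = !![s, 0; s - s⁻¹, s⁻¹] := rfl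

lemma diagSL_inv (u : K) (hu : u ≠ 0) :
    (diagSL u hu)⁻¹ = diagSL u⁻¹ (inv_ne_zero hu) := by
  apply inv_eq_of_mul_eq_one_right
  apply Subtype.ext
  show (!![u, 0; 0, u⁻¹] : Matrix (Fin 2) (Fin 2) K) * !![u⁻¹, 0; 0, u⁻¹⁻¹] = 1
  ext i j
  fin_cases i <;> fin_cases j <;>
    simp [Matrix.mul_apply, Fin.sum_univ_two, Matrix.one_apply] <;> field_simp

lemma trace_conj (A M : SpecialLinearGroup (Fin 2) K) :
    Matrix.trace ((A * M * A⁻¹ : SpecialLinearGroup (Fin 2) K) : Matrix (Fin 2) (Fin 2) K)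
      = Matrix.trace (M : Matrix (Fin 2) (Fin 2) K) := by
  have h : ((A * M * A⁻¹ : SpecialLinearGroup (Fin 2) K) : Matrix (Fin 2) (Fin 2) K)
      = (A : Matrix (Fin 2) (Fin 2) K) * M * (A⁻¹ : SpecialLinearGroup (Fin 2) K) := by
    simp [mul_assoc]
  rw [h, Matrix.trace_mul_cycle]
  have h2 : ((A⁻¹ : SpecialLinearGroup (Fin 2) K) : Matrix (Fin 2) (Fin 2) K) * A = 1 := by
    rw [← Matrix.SpecialLinearGroup.coe_mul, inv_mul_cancel]
    rfl
  rw [h2, one_mul]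

lemma commute_entries (r : K) (hr : r ≠ 0) (hr2 : r ^ 2 ≠ 1)
    (C : SpecialLinearGroup (Fin 2) K) (h : C * diagSL r hr = diagSL r hr * C) :
    (C : Matrix (Fin 2) (Fin 2) K) 0 1 = 0 ∧ (C : Matrix (Fin 2) (Fin 2) K) 1 0 = 0 := by
  have hrr : r - r⁻¹ ≠ 0 := by
    intro hcon
    apply hr2
    linear_combination r * hcon + mul_inv_cancel₀ hr
  have h' : (C : Matrix (Fin 2) (Fin 2) K) * !![r, 0; 0, r⁻¹]
      = !![r, 0; 0, r⁻¹] * (C : Matrix (Fin 2) (Fin 2) K) := by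
    have := congrArg (Subtype.val) h
    simpa using this
  constructor
  · have h01 := congrFun (congrFun h' 0) 1
    simp [Matrix.mul_apply, Fin.sum_univ_two] at h01
    have : (C : Matrix (Fin 2) (Fin 2) K) 0 1 * (r⁻¹ - r) = 0 := by linear_combination h01
    rcases mul_eq_zero.mp this with h | h
    · exact h
    · exact absurd (by linear_combination -h) hrr
  · have h10 := congrFun (congrFun h' 1) 0
    simp [Matrix.mul_apply, Fin.sum_univ_two] at h10
    have : (C : Matrix (Fin 2) (Fin 2) K) 1 0 * (r - r⁻¹) = 0 := by linear_combination h10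
    rcases mul_eq_zero.mp this with h | h
    · exact h
    · exact absurd h hrr


lemma sub_inv_ne (s : K) (hs : s ≠ 0) (hs2 : s ^ 2 ≠ 1) : s - s⁻¹ ≠ 0 := by
  intro hcon
  apply hs2
  linear_combination s * hcon + mul_inv_cancel₀ hs

lemma lowSL_eq_conj (s : K) (hs : s ≠ 0) :
    ∃ C : SpecialLinearGroup (Fin 2) K, lowSL s hs = C * diagSL s hs * C⁻¹ := by
  refine ⟨⟨!![1, 0; 1, 1], by rw [Matrix.det_fin_two_of]; ring⟩, ?_⟩
  apply eq_mul_inv_iff_mul_eq.mpr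
  apply Subtype.ext
  show (!![s, 0; s - s⁻¹, s⁻¹] : Matrix (Fin 2) (Fin 2) K) * !![1, 0; 1, 1]
      = !![1, 0; 1, 1] * !![s, 0; 0, s⁻¹]
  ext i j
  fin_cases i <;> fin_cases j <;> simp [Matrix.mul_apply, Fin.sum_univ_two] <;> ring

lemma upSL_eq_conj (s : K) (hs : s ≠ 0) :
    ∃ C : SpecialLinearGroup (Fin 2) K, upSL s hs = C * diagSL s hs * C⁻¹ := by
  refine ⟨⟨!![1, -1; 0, 1], by rw [Matrix.det_fin_two_of]; ring⟩, ?_⟩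
  apply eq_mul_inv_iff_mul_eq.mpr
  apply Subtype.ext
  show (!![s, s - s⁻¹; 0, s⁻¹] : Matrix (Fin 2) (Fin 2) K) * !![1, -1; 0, 1]
      = !![1, -1; 0, 1] * !![s, 0; 0, s⁻¹]
  ext i j
  fin_cases i <;> fin_cases j <;> simp [Matrix.mul_apply, Fin.sum_univ_two] <;> ring

lemma trace_prod_conj (A P Q : SpecialLinearGroup (Fin 2) K) :
    Matrix.trace (((A * P * A⁻¹ : SpecialLinearGroup (Fin 2) K) : Matrix (Fin 2) (Fin 2) K)
        * ((A * Q * A⁻¹ : SpecialLinearGroup (Fin 2) K) : Matrix (Fin 2) (Fin 2) K))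
      = Matrix.trace ((P : Matrix (Fin 2) (Fin 2) K) * (Q : Matrix (Fin 2) (Fin 2) K)) := by
  have h : (A * P * A⁻¹) * (A * Q * A⁻¹) = A * (P * Q) * A⁻¹ := by group
  rw [← Matrix.SpecialLinearGroup.coe_mul, h, trace_conj, Matrix.SpecialLinearGroup.coe_mul]

lemma disjoint_orbits (r : K) (hr : r ≠ 0) (hr2 : r ^ 2 ≠ 1)
    (P Q : SpecialLinearGroup (Fin 2) K)
    (hne : ∀ C : SpecialLinearGroup (Fin 2) K,
      (C : Matrix (Fin 2) (Fin 2) K) 0 1 = 0 → (C : Matrix (Fin 2) (Fin 2) K) 1 0 = 0 →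
      C * P ≠ Q * C) :
    Disjoint (pairOrbit P (diagSL r hr)) (pairOrbit Q (diagSL r hr)) := by
  rw [Set.disjoint_left]
  rintro ⟨x, y⟩ ⟨A, hA⟩ ⟨B, hB⟩
  rw [Prod.mk.injEq] at hA hB
  obtain ⟨hA1, hA2⟩ := hA
  obtain ⟨hB1, hB2⟩ := hB
  have h2 : A * diagSL r hr * A⁻¹ = B * diagSL r hr * B⁻¹ := hA2 ▸ hB2
  have h1 : A * P * A⁻¹ = B * Q * B⁻¹ := hA1 ▸ hB1
  have hC : (B⁻¹ * A) * diagSL r hr = diagSL r hr * (B⁻¹ * A) := by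
    calc (B⁻¹ * A) * diagSL r hr = B⁻¹ * (A * diagSL r hr * A⁻¹) * A := by group
      _ = B⁻¹ * (B * diagSL r hr * B⁻¹) * A := by rw [h2]
      _ = diagSL r hr * (B⁻¹ * A) := by group
  have hCP : (B⁻¹ * A) * P = Q * (B⁻¹ * A) := by
    calc (B⁻¹ * A) * P = B⁻¹ * (A * P * A⁻¹) * A := by group
      _ = B⁻¹ * (B * Q * B⁻¹) * A := by rw [h1]
      _ = Q * (B⁻¹ * A) := by group
  obtain ⟨h01, h10⟩ := commute_entries r hr hr2 _ hC
  exact hne _ h01 h10 hCP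


lemma hne_low_up (s : K) (hs : s ≠ 0) (hs2 : s ^ 2 ≠ 1)
    (C : SpecialLinearGroup (Fin 2) K)
    (h01 : (C : Matrix (Fin 2) (Fin 2) K) 0 1 = 0) (h10 : (C : Matrix (Fin 2) (Fin 2) K) 1 0 = 0) :
    C * lowSL s hs ≠ upSL s hs * C := by
  intro hcon
  have h' := congrArg Subtype.val hcon
  have h10' := congrFun (congrFun h' 1) 0
  simp [Matrix.mul_apply, Fin.sum_univ_two, h10] at h10'
  have hdet := C.2
  rw [Matrix.det_fin_two] at hdet
  rcases h10' with h | h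
  · exact one_ne_zero (α := K) (by linear_combination -hdet + (C : Matrix (Fin 2) (Fin 2) K) 0 0 * h - (C : Matrix (Fin 2) (Fin 2) K) 1 0 * h01)
  · exact sub_inv_ne s hs hs2 h

lemma hne_low_diag (s : K) (hs : s ≠ 0) (hs2 : s ^ 2 ≠ 1)
    (C : SpecialLinearGroup (Fin 2) K)
    (h01 : (C : Matrix (Fin 2) (Fin 2) K) 0 1 = 0) (h10 : (C : Matrix (Fin 2) (Fin 2) K) 1 0 = 0) :
    C * lowSL s hs ≠ diagSL s hs * C := by
  intro hcon
  have h' := congrArg Subtype.val hcon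
  have h10' := congrFun (congrFun h' 1) 0
  simp [Matrix.mul_apply, Fin.sum_univ_two, h10] at h10'
  have hdet := C.2
  rw [Matrix.det_fin_two] at hdet
  rcases h10' with h | h
  · exact one_ne_zero (α := K) (by linear_combination -hdet + (C : Matrix (Fin 2) (Fin 2) K) 0 0 * h - (C : Matrix (Fin 2) (Fin 2) K) 1 0 * h01)
  · exact sub_inv_ne s hs hs2 h

lemma hne_up_diag (s : K) (hs : s ≠ 0) (hs2 : s ^ 2 ≠ 1)
    (C : SpecialLinearGroup (Fin 2) K)
    (h01 : (C : Matrix (Fin 2) (Fin 2) K) 0 1 = 0) (h10 : (C : Matrix (Fin 2) (Fin 2) K) 1 0 = 0) :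
    C * upSL s hs ≠ diagSL s hs * C := by
  intro hcon
  have h' := congrArg Subtype.val hcon
  have h01' := congrFun (congrFun h' 0) 1
  simp [Matrix.mul_apply, Fin.sum_univ_two, h01] at h01'
  have hdet := C.2
  rw [Matrix.det_fin_two] at hdet
  rcases h01' with h | h
  · exact one_ne_zero (α := K) (by linear_combination -hdet + (C : Matrix (Fin 2) (Fin 2) K) 1 1 * h - (C : Matrix (Fin 2) (Fin 2) K) 1 0 * h01)
  · exact sub_inv_ne s hs hs2 h


lemma diag_conj_diag (u r : K) (hu : u ≠ 0) (hr : r ≠ 0) :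
    diagSL u hu * diagSL r hr * (diagSL u hu)⁻¹ = diagSL r hr := by
  rw [mul_inv_eq_iff_eq_mul]
  apply Subtype.ext
  show (!![u, 0; 0, u⁻¹] : Matrix (Fin 2) (Fin 2) K) * !![r, 0; 0, r⁻¹]
      = !![r, 0; 0, r⁻¹] * !![u, 0; 0, u⁻¹]
  ext i j
  fin_cases i <;> fin_cases j <;> simp [Matrix.mul_apply, Fin.sum_univ_two] <;> ring

lemma classify (s r : K) (hs : s ≠ 0) (hr : r ≠ 0) (hs2 : s ^ 2 ≠ 1) (hr2 : r ^ 2 ≠ 1)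
    [IsAlgClosed K]
    (X : SpecialLinearGroup (Fin 2) K)
    (hX : ∃ A : SpecialLinearGroup (Fin 2) K, X = A * diagSL s hs * A⁻¹)
    (htr : Matrix.trace ((X : Matrix (Fin 2) (Fin 2) K) * (diagSL r hr : Matrix (Fin 2) (Fin 2) K))
      = s * r + s⁻¹ * r⁻¹) :
    ∃ D : SpecialLinearGroup (Fin 2) K, D * diagSL r hr * D⁻¹ = diagSL r hr ∧
      (X = D * lowSL s hs * D⁻¹ ∨ X = D * upSL s hs * D⁻¹ ∨ X = D * diagSL s hs * D⁻¹) := by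
  have hΔ : s - s⁻¹ ≠ 0 := sub_inv_ne s hs hs2
  have hrr : r - r⁻¹ ≠ 0 := sub_inv_ne r hr hr2
  obtain ⟨A, hA⟩ := hX
  have h1 : (X : Matrix (Fin 2) (Fin 2) K) 0 0 + (X : Matrix (Fin 2) (Fin 2) K) 1 1
      = s + s⁻¹ := by
    have := trace_conj A (diagSL s hs)
    rw [← hA, Matrix.trace_fin_two] at this
    rw [this, coe_diagSL, Matrix.trace_fin_two]
    simp
  have h2 : (X : Matrix (Fin 2) (Fin 2) K) 0 0 * r + (X : Matrix (Fin 2) (Fin 2) K) 1 1 * r⁻¹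
      = s * r + s⁻¹ * r⁻¹ := by
    rw [coe_diagSL, Matrix.trace_fin_two, Matrix.mul_apply, Matrix.mul_apply,
      Fin.sum_univ_two, Fin.sum_univ_two] at htr
    simp at htr
    linear_combination htr
  have ha : (X : Matrix (Fin 2) (Fin 2) K) 0 0 = s := by
    have key : ((X : Matrix (Fin 2) (Fin 2) K) 0 0 - s) * (r - r⁻¹) = 0 := by
      linear_combination h2 - r⁻¹ * h1
    rcases mul_eq_zero.mp key with h | h
    · linear_combination h
    · exact absurd h hrr
  have hd : (X : Matrix (Fin 2) (Fin 2) K) 1 1 = s⁻¹ := by linear_combination h1 - ha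
  have hdet : (X : Matrix (Fin 2) (Fin 2) K) 0 0 * (X : Matrix (Fin 2) (Fin 2) K) 1 1
      - (X : Matrix (Fin 2) (Fin 2) K) 0 1 * (X : Matrix (Fin 2) (Fin 2) K) 1 0 = 1 := by
    have := X.2
    rwa [Matrix.det_fin_two] at this
  have hbc : (X : Matrix (Fin 2) (Fin 2) K) 0 1 * (X : Matrix (Fin 2) (Fin 2) K) 1 0 = 0 := by
    linear_combination (X : Matrix (Fin 2) (Fin 2) K) 1 1 * ha + s * hd - hdet
      + mul_inv_cancel₀ hs
  rcases mul_eq_zero.mp hbc with hb | hc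
  · by_cases hc : (X : Matrix (Fin 2) (Fin 2) K) 1 0 = 0
    · refine ⟨1, by simp, Or.inr (Or.inr ?_)⟩
      apply Subtype.ext
      simp only [Matrix.SpecialLinearGroup.coe_mul, Matrix.SpecialLinearGroup.coe_one,
        inv_one, one_mul, mul_one]
      rw [Matrix.eta_fin_two (X : Matrix (Fin 2) (Fin 2) K), ha, hd, hb, hc, coe_diagSL]
    · obtain ⟨u, hu2⟩ := IsAlgClosed.exists_pow_nat_eq
        ((s - s⁻¹) / (X : Matrix (Fin 2) (Fin 2) K) 1 0) (zero_lt_two)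
      have hu : u ≠ 0 := by
        intro h
        apply div_ne_zero hΔ hc
        rw [← hu2, h]
        norm_num
      refine ⟨diagSL u hu, diag_conj_diag u r hu hr, Or.inl ?_⟩
      rw [diagSL_inv]
      apply Subtype.ext
      simp only [Matrix.SpecialLinearGroup.coe_mul, coe_diagSL, coe_lowSL]
      rw [Matrix.eta_fin_two (X : Matrix (Fin 2) (Fin 2) K), ha, hd, hb]
      ext i j
      fin_cases i <;> fin_cases j <;>
        simp [Matrix.mul_apply, Fin.sum_univ_two]
      all_goals field_simp
      linear_combination s * ((eq_div_iff hc).mp hu2) - mul_inv_cancel₀ hs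
  · by_cases hb : (X : Matrix (Fin 2) (Fin 2) K) 0 1 = 0
    · refine ⟨1, by simp, Or.inr (Or.inr ?_)⟩
      apply Subtype.ext
      simp only [Matrix.SpecialLinearGroup.coe_mul, Matrix.SpecialLinearGroup.coe_one,
        inv_one, one_mul, mul_one]
      rw [Matrix.eta_fin_two (X : Matrix (Fin 2) (Fin 2) K), ha, hd, hb, hc, coe_diagSL]
    · obtain ⟨u, hu2⟩ := IsAlgClosed.exists_pow_nat_eq
        ((X : Matrix (Fin 2) (Fin 2) K) 0 1 / (s - s⁻¹)) (zero_lt_two)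
      have hu : u ≠ 0 := by
        intro h
        apply div_ne_zero hb hΔ
        rw [← hu2, h]
        norm_num
      refine ⟨diagSL u hu, diag_conj_diag u r hu hr, Or.inr (Or.inl ?_)⟩
      rw [diagSL_inv]
      apply Subtype.ext
      simp only [Matrix.SpecialLinearGroup.coe_mul, coe_diagSL, coe_upSL]
      rw [Matrix.eta_fin_two (X : Matrix (Fin 2) (Fin 2) K), ha, hd, hc]
      ext i j
      fin_cases i <;> fin_cases j <;>
        simp [Matrix.mul_apply, Fin.sum_univ_two]
      all_goals field_simp
      linear_combination (-s) * ((eq_div_iff hΔ).mp hu2) - u ^ 2 * mul_inv_cancel₀ hs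


lemma orbit_subset (s r : K) (hs : s ≠ 0) (hr : r ≠ 0)
    (P : SpecialLinearGroup (Fin 2) K)
    (hP : ∃ C : SpecialLinearGroup (Fin 2) K, P = C * diagSL s hs * C⁻¹)
    (htr : Matrix.trace ((P : Matrix (Fin 2) (Fin 2) K) * (diagSL r hr : Matrix (Fin 2) (Fin 2) K))
      = s * r + s⁻¹ * r⁻¹) :
    pairOrbit P (diagSL r hr) ⊆
      {pq : SpecialLinearGroup (Fin 2) K × SpecialLinearGroup (Fin 2) K |
        (∃ A : SpecialLinearGroup (Fin 2) K, pq.1 = A * diagSL s hs * A⁻¹) ∧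
        (∃ A : SpecialLinearGroup (Fin 2) K, pq.2 = A * diagSL r hr * A⁻¹) ∧
        Matrix.trace ((pq.1 : Matrix (Fin 2) (Fin 2) K) * (pq.2 : Matrix (Fin 2) (Fin 2) K)) =
          s * r + s⁻¹ * r⁻¹} := by
  rintro ⟨x, y⟩ ⟨A, hA⟩
  rw [Prod.mk.injEq] at hA
  obtain ⟨h1, h2⟩ := hA
  obtain ⟨C, hC⟩ := hP
  refine ⟨⟨A * C, by rw [h1, hC]; group⟩, ⟨A, h2⟩, ?_⟩
  show Matrix.trace ((x : Matrix (Fin 2) (Fin 2) K) * (y : Matrix (Fin 2) (Fin 2) K)) = _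
  rw [h1, h2, trace_prod_conj]
  exact htr

end FiberAux

open FiberAux

/-- The fiber `tr(XY) = sr + s⁻¹r⁻¹` is the union of the three pairwise disjoint orbits
of `([[s,0],[Δ,s⁻¹]], t')`, `([[s,Δ],[0,s⁻¹]], t')`, `(t, t')`. -/
theorem fiber_l0_decomposition {K : Type*} [Field K] [IsAlgClosed K]
    (s r : K) (hs : s ≠ 0) (hr : r ≠ 0) (hs2 : s ^ 2 ≠ 1) (hr2 : r ^ 2 ≠ 1) :
    ({pq : SpecialLinearGroup (Fin 2) K × SpecialLinearGroup (Fin 2) K |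
        (∃ A : SpecialLinearGroup (Fin 2) K, pq.1 = A * diagSL s hs * A⁻¹) ∧
        (∃ A : SpecialLinearGroup (Fin 2) K, pq.2 = A * diagSL r hr * A⁻¹) ∧
        Matrix.trace ((pq.1 : Matrix (Fin 2) (Fin 2) K) * (pq.2 : Matrix (Fin 2) (Fin 2) K)) =
          s * r + s⁻¹ * r⁻¹} =
      pairOrbit (lowSL s hs) (diagSL r hr) ∪ pairOrbit (upSL s hs) (diagSL r hr) ∪
        pairOrbit (diagSL s hs) (diagSL r hr)) ∧
    Disjoint (pairOrbit (lowSL s hs) (diagSL r hr)) (pairOrbit (upSL s hs) (diagSL r hr)) ∧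
    Disjoint (pairOrbit (lowSL s hs) (diagSL r hr)) (pairOrbit (diagSL s hs) (diagSL r hr)) ∧
    Disjoint (pairOrbit (upSL s hs) (diagSL r hr)) (pairOrbit (diagSL s hs) (diagSL r hr)) := by
  refine ⟨?_, ?_, ?_, ?_⟩
  · apply Set.Subset.antisymm
    · rintro ⟨X, Y⟩ ⟨⟨A, hA⟩, ⟨B, hB⟩, htr⟩
      simp only at hA hB htr
      set X'' := B⁻¹ * X * B with hX''def
      have hXconj : ∃ A' : SpecialLinearGroup (Fin 2) K,
          X'' = A' * diagSL s hs * A'⁻¹ := ⟨B⁻¹ * A, by rw [hX''def, hA]; group⟩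
      have htr'' : Matrix.trace ((X'' : Matrix (Fin 2) (Fin 2) K)
          * (diagSL r hr : Matrix (Fin 2) (Fin 2) K)) = s * r + s⁻¹ * r⁻¹ := by
        have e : X'' * diagSL r hr = B⁻¹ * (X * Y) * (B⁻¹)⁻¹ := by
          rw [hX''def, hB]; group
        rw [← Matrix.SpecialLinearGroup.coe_mul, e, FiberAux.trace_conj,
          Matrix.SpecialLinearGroup.coe_mul]
        exact htr
      obtain ⟨D, hDcomm, hcase⟩ := classify s r hs hr hs2 hr2 X'' hXconj htr''
      have hXform : X = B * X'' * B⁻¹ := by rw [hX''def]; group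
      have hYform : Y = (B * D) * diagSL r hr * (B * D)⁻¹ := by
        have e : (B * D) * diagSL r hr * (B * D)⁻¹
            = B * (D * diagSL r hr * D⁻¹) * B⁻¹ := by group
        rw [e, hDcomm, ← hB]
      rcases hcase with h | h | h
      · exact Or.inl (Or.inl ⟨B * D, by
          rw [Prod.mk.injEq]
          refine ⟨?_, hYform⟩
          rw [hXform, h]; group⟩)
      · exact Or.inl (Or.inr ⟨B * D, by
          rw [Prod.mk.injEq]
          refine ⟨?_, hYform⟩
          rw [hXform, h]; group⟩)
      · exact Or.inr ⟨B * D, by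
          rw [Prod.mk.injEq]
          refine ⟨?_, hYform⟩
          rw [hXform, h]; group⟩
    · refine Set.union_subset (Set.union_subset ?_ ?_) ?_
      · refine orbit_subset s r hs hr _ (lowSL_eq_conj s hs) ?_
        rw [coe_lowSL, coe_diagSL, Matrix.trace_fin_two]
        simp [Matrix.mul_apply, Fin.sum_univ_two]
      · refine orbit_subset s r hs hr _ (upSL_eq_conj s hs) ?_
        rw [coe_upSL, coe_diagSL, Matrix.trace_fin_two]
        simp [Matrix.mul_apply, Fin.sum_univ_two]
      · refine orbit_subset s r hs hr _ ⟨1, by group⟩ ?_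
        rw [coe_diagSL, coe_diagSL, Matrix.trace_fin_two]
        simp [Matrix.mul_apply, Fin.sum_univ_two]
  · exact disjoint_orbits r hr hr2 _ _ (fun C h01 h10 => hne_low_up s hs hs2 C h01 h10)
  · exact disjoint_orbits r hr hr2 _ _ (fun C h01 h10 => hne_low_diag s hs hs2 C h01 h10)
  · exact disjoint_orbits r hr hr2 _ _ (fun C h01 h10 => hne_up_diag s hs hs2 C h01 h10)
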